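/- Let W be a graphon and for k ∈ ℕ let t(K_k, W) be the homomorphism density of the complete graph K_k in W. Suppose t(K_ℓ, W) > 0 for some ℓ ≥ 1. Then P[ω(G(n,W)) ≥ ℓ] → 1 as n → ∞, where ω denotes the clique number of the inhomogeneous random graph G(n,W). -/

import Mathlib

open MeasureTheory Filter

/-- The homomorphism density `t(K_k, W)` of the complete graph `K_k` in a graphon `W`. -/
noncomputable def cliqueDensity {Ω : Type*} [MeasurableSpace Ω] (μ : Measure Ω)
    (W : Ω → Ω → ℝ) (k : ℕ) : ENNReal :=
  ∫⁻ x : Fin k → Ω,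
      ∏ p ∈ Finset.univ.filter (fun p : Fin k × Fin k => p.1 < p.2),
        ENNReal.ofReal (W (x p.1) (x p.2))
    ∂(Measure.pi fun _ => μ)

/-- The sample space measure for the inhomogeneous random graph `G(n, W)`:
`n` i.i.d. vertices sampled from `μ` together with i.i.d. uniform `(0,1)` edge
thresholds; the edge `{i, j}` (for `i < j`) is present iff the threshold at `(i,j)`
is at most `W(x_i, x_j)`. -/
noncomputable def gnwMeasure {Ω : Type*} [MeasurableSpace Ω] (μ : Measure Ω) (n : ℕ) :
    Measure ((Fin n → Ω) × (Fin n × Fin n → ℝ)) :=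
  (Measure.pi fun _ => μ).prod
    (Measure.pi fun _ => (volume : Measure ℝ).restrict (Set.Ioo 0 1))

/-- The event that `G(n, W)` contains a clique on `ℓ` vertices, i.e. `ω(G(n,W)) ≥ ℓ`. -/
def hasCliqueEvent {Ω : Type*} (W : Ω → Ω → ℝ) (n ℓ : ℕ) :
    Set ((Fin n → Ω) × (Fin n × Fin n → ℝ)) :=
  {z | ∃ S : Finset (Fin n), S.card = ℓ ∧
    ∀ i ∈ S, ∀ j ∈ S, i < j → z.2 (i, j) ≤ W (z.1 i) (z.1 j)}


section Helpers

variable {α β X : Type*} [Fintype α] [Fintype β] [DecidableEq β]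
  [MeasurableSpace X] (μ : Measure X) [IsProbabilityMeasure μ]

/-- Pushing a product of i.i.d. coordinates forward along precomposition with an
injective map is measure preserving. -/
lemma measurePreserving_comp_injective {u : α → β} (hu : Function.Injective u) :
    MeasurePreserving (fun x : β → X => x ∘ u)
      (Measure.pi fun _ => μ) (Measure.pi fun _ => μ) := by
  have hm : Measurable (fun x : β → X => x ∘ u) :=
    measurable_pi_lambda _ fun a => measurable_pi_apply (u a)
  refine ⟨hm, (Measure.pi_eq fun s hs => ?_).symm⟩
  classical
  set t : β → Set X := fun b => if h : ∃ a, u a = b then s h.choose else Set.univ with ht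
  have htu : ∀ a, t (u a) = s a := by
    intro a
    have h : ∃ a', u a' = u a := ⟨a, rfl⟩
    have : h.choose = a := hu h.choose_spec
    simp [ht, dif_pos h, this]
  have hpre : (fun x : β → X => x ∘ u) ⁻¹' (Set.univ.pi s) = Set.univ.pi t := by
    ext x
    simp only [Set.mem_preimage, Set.mem_pi, Set.mem_univ, forall_true_left, true_implies]
    constructor
    · intro h b
      by_cases hb : ∃ a, u a = b
      · simpa [ht, dif_pos hb, hb.choose_spec] using h hb.choose
      · simp [ht, dif_neg hb]
    · intro h a
      have := h (u a)
      rwa [htu] at this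
  rw [Measure.map_apply hm (MeasurableSet.univ_pi hs), hpre, Measure.pi_pi]
  calc ∏ b, μ (t b) = ∏ b ∈ Finset.univ.image u, μ (t b) := by
        refine (Finset.prod_subset (Finset.subset_univ _) fun b _ hb => ?_).symm
        have : ¬ ∃ a, u a = b := by
          rintro ⟨a, rfl⟩
          exact hb (Finset.mem_image_of_mem u (Finset.mem_univ a))
        simp [ht, dif_neg this]
    _ = ∏ a, μ (t (u a)) :=
        Finset.prod_image fun a _ b _ h => hu h
    _ = ∏ a, μ (s a) := by simp [htu]

end Helpers

section Helpers2

variable {α α' β X : Type*} [Fintype α] [Fintype α'] [Fintype β] [DecidableEq β]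
  [MeasurableSpace X] (μ : Measure X) [IsProbabilityMeasure μ]

/-- Restricting i.i.d. coordinates to two disjoint injective blocks gives an
independent pair of i.i.d. families. -/
lemma measurePreserving_pair_comp {f : α → β} {g : α' → β}
    (h : Function.Injective (Sum.elim f g)) :
    MeasurePreserving (fun x : β → X => (x ∘ f, x ∘ g))
      (Measure.pi fun _ => μ)
      ((Measure.pi fun _ : α => μ).prod (Measure.pi fun _ : α' => μ)) := by
  have h1 := measurePreserving_comp_injective (X := X) μ h
  have h2 : MeasurePreserving (MeasurableEquiv.sumPiEquivProdPi fun _ : α ⊕ α' => X)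
      (Measure.pi fun _ => μ)
      ((Measure.pi fun _ : α => μ).prod (Measure.pi fun _ : α' => μ)) := by
    have := (MeasureTheory.measurePreserving_sumPiEquivProdPi_symm
      (X := fun _ : α ⊕ α' => X) (fun _ => μ)).symm (MeasurableEquiv.sumPiEquivProdPi _).symm
    simpa using this
  exact h2.comp h1

end Helpers2

section Helpers3

variable {A B C D : Type*} [MeasurableSpace A] [MeasurableSpace B] [MeasurableSpace C]
  [MeasurableSpace D] (μa : Measure A) (μb : Measure B) (μc : Measure C) (μd : Measure D)
  [SigmaFinite μa] [SigmaFinite μb] [SigmaFinite μc] [SigmaFinite μd]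

lemma measurePreserving_pppc :
    MeasurePreserving (fun z : (A × B) × C × D => ((z.1.1, z.2.1), (z.1.2, z.2.2)))
      ((μa.prod μb).prod (μc.prod μd)) ((μa.prod μc).prod (μb.prod μd)) := by
  have h1 := MeasureTheory.measurePreserving_prodAssoc μa μb (μc.prod μd)
  -- inner map : B × (C × D) → C × (B × D)
  have hinner : MeasurePreserving (fun w : B × C × D => (w.2.1, (w.1, w.2.2)))
      (μb.prod (μc.prod μd)) (μc.prod (μb.prod μd)) := by
    have e1 := (MeasureTheory.measurePreserving_prodAssoc μb μc μd).symm
      (MeasurableEquiv.prodAssoc)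
    have e2 := (Measure.measurePreserving_swap (μ := μb) (ν := μc)).prod
      (MeasurePreserving.id μd)
    have e3 := MeasureTheory.measurePreserving_prodAssoc μc μb μd
    have := (e3.comp e2).comp e1
    exact this
  have h2 := (MeasurePreserving.id μa).prod hinner
  have h3 := (MeasureTheory.measurePreserving_prodAssoc μa μc (μb.prod μd)).symm
      (MeasurableEquiv.prodAssoc)
  exact (h3.comp h2).comp h1

end Helpers3

section Graphon

variable {Ω : Type*} [MeasurableSpace Ω] (μ : Measure Ω) [IsProbabilityMeasure μ]
  (W : Ω → Ω → ℝ)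

instance : IsProbabilityMeasure ((volume : Measure ℝ).restrict (Set.Ioo 0 1)) :=
  ⟨by simp⟩

instance (n : ℕ) : IsProbabilityMeasure (gnwMeasure μ n) := by
  unfold gnwMeasure; infer_instance

/-- The event that all of `Fin ℓ` forms a clique. -/
def fullCliqueEvent (ℓ : ℕ) : Set ((Fin ℓ → Ω) × (Fin ℓ × Fin ℓ → ℝ)) :=
  {z | ∀ p : Fin ℓ × Fin ℓ, p.1 < p.2 → z.2 p ≤ W (z.1 p.1) (z.1 p.2)}

variable {W}

lemma measurableSet_edge (hW : Measurable (Function.uncurry W)) {n : ℕ} (i j : Fin n) :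
    MeasurableSet {z : (Fin n → Ω) × (Fin n × Fin n → ℝ) | z.2 (i, j) ≤ W (z.1 i) (z.1 j)} := by
  have h1 : Measurable fun z : (Fin n → Ω) × (Fin n × Fin n → ℝ) => z.2 (i, j) :=
    (measurable_pi_apply _).comp measurable_snd
  have hpair : Measurable fun z : (Fin n → Ω) × (Fin n × Fin n → ℝ) => (z.1 i, z.1 j) :=
    ((measurable_pi_apply i).comp measurable_fst).prodMk
      ((measurable_pi_apply j).comp measurable_fst)
  have h2 : Measurable fun z : (Fin n → Ω) × (Fin n × Fin n → ℝ) => W (z.1 i) (z.1 j) :=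
    hW.comp hpair
  exact measurableSet_le h1 h2

lemma measurableSet_fullCliqueEvent (hW : Measurable (Function.uncurry W)) (ℓ : ℕ) :
    MeasurableSet (fullCliqueEvent W ℓ) := by
  have : fullCliqueEvent W ℓ =
      ⋂ (p : Fin ℓ × Fin ℓ) (_ : p.1 < p.2),
        {z : (Fin ℓ → Ω) × (Fin ℓ × Fin ℓ → ℝ) | z.2 p ≤ W (z.1 p.1) (z.1 p.2)} := by
    ext z; simp [fullCliqueEvent]
  rw [this]
  exact MeasurableSet.iInter fun p => MeasurableSet.iInter fun _ =>
    measurableSet_edge hW p.1 p.2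

lemma measurableSet_hasCliqueEvent (hW : Measurable (Function.uncurry W)) (n ℓ : ℕ) :
    MeasurableSet (hasCliqueEvent W n ℓ) := by
  have : hasCliqueEvent W n ℓ =
      ⋃ (S : Finset (Fin n)) (_ : S.card = ℓ),
        ⋂ (i : Fin n) (_ : i ∈ S) (j : Fin n) (_ : j ∈ S) (_ : i < j),
          {z : (Fin n → Ω) × (Fin n × Fin n → ℝ) | z.2 (i, j) ≤ W (z.1 i) (z.1 j)} := by
    ext z
    simp only [hasCliqueEvent, Set.mem_setOf_eq, Set.mem_iUnion, Set.mem_iInter,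
      Set.mem_setOf_eq]
    tauto
  rw [this]
  exact MeasurableSet.iUnion fun S => MeasurableSet.iUnion fun _ =>
    MeasurableSet.iInter fun i => MeasurableSet.iInter fun _ =>
      MeasurableSet.iInter fun j => MeasurableSet.iInter fun _ =>
        MeasurableSet.iInter fun _ => measurableSet_edge hW i j

end Graphon

lemma restrict_Ioo_Iic {w : ℝ} (h0 : 0 ≤ w) (h1 : w ≤ 1) :
    (volume : Measure ℝ).restrict (Set.Ioo 0 1) (Set.Iic w) = ENNReal.ofReal w := by
  rw [Measure.restrict_apply measurableSet_Iic]
  apply le_antisymm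
  · calc volume (Set.Iic w ∩ Set.Ioo 0 1) ≤ volume (Set.Icc 0 w) := by
          apply measure_mono
          rintro t ⟨ht1, ht2, _⟩
          exact ⟨le_of_lt ht2, ht1⟩
      _ = ENNReal.ofReal w := by rw [Real.volume_Icc]; simp
  · calc ENNReal.ofReal w = volume (Set.Ioo 0 w) := by rw [Real.volume_Ioo]; simp
      _ ≤ volume (Set.Iic w ∩ Set.Ioo 0 1) := by
          apply measure_mono
          rintro t ⟨ht1, ht2⟩
          exact ⟨le_of_lt ht2, ht1, lt_of_lt_of_le ht2 h1⟩

section Base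

variable {Ω : Type*} [MeasurableSpace Ω] (μ : Measure Ω) [IsProbabilityMeasure μ]
  {W : Ω → Ω → ℝ}

lemma gnw_fullClique (hW : Measurable (Function.uncurry W))
    (h0 : ∀ x y, 0 ≤ W x y) (h1 : ∀ x y, W x y ≤ 1) (ℓ : ℕ) :
    gnwMeasure μ ℓ (fullCliqueEvent W ℓ) = cliqueDensity μ W ℓ := by
  classical
  rw [gnwMeasure, Measure.prod_apply (measurableSet_fullCliqueEvent hW ℓ)]
  unfold cliqueDensity
  congr 1
  ext x
  have hslice : (Prod.mk x ⁻¹' fullCliqueEvent W ℓ) =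
      Set.univ.pi (fun p : Fin ℓ × Fin ℓ =>
        if p.1 < p.2 then Set.Iic (W (x p.1) (x p.2)) else Set.univ) := by
    ext θ
    simp only [Set.mem_preimage, fullCliqueEvent, Set.mem_setOf_eq, Set.mem_pi, Set.mem_univ,
      true_implies]
    refine forall_congr' fun p => ?_
    split_ifs with hp <;> simp [hp]
  rw [hslice, Measure.pi_pi, Finset.prod_filter]
  refine Finset.prod_congr rfl fun p _ => ?_
  split_ifs with hp
  · exact restrict_Ioo_Iic (h0 _ _) (h1 _ _)
  · simp

end Base

section Events

variable {Ω : Type*} [MeasurableSpace Ω] {μ : Measure Ω} [IsProbabilityMeasure μ]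
  {W : Ω → Ω → ℝ}

lemma mem_hasClique_of_block {ℓ n : ℕ} {f : Fin ℓ → Fin n} (hf : StrictMono f)
    {z : (Fin n → Ω) × (Fin n × Fin n → ℝ)}
    (hz : (z.1 ∘ f, z.2 ∘ Prod.map f f) ∈ fullCliqueEvent W ℓ) :
    z ∈ hasCliqueEvent W n ℓ := by
  refine ⟨Finset.univ.map ⟨f, hf.injective⟩, by simp, ?_⟩
  intro i hi j hj hij
  simp only [Finset.mem_map, Finset.mem_univ, Function.Embedding.coeFn_mk, true_and] at hi hj
  obtain ⟨a, rfl⟩ := hi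
  obtain ⟨b, rfl⟩ := hj
  exact hz (a, b) (hf.lt_iff_lt.mp hij)

lemma mem_hasClique_of_sub {m n ℓ : ℕ} {f : Fin m → Fin n} (hf : StrictMono f)
    {z : (Fin n → Ω) × (Fin n × Fin n → ℝ)}
    (hz : (z.1 ∘ f, z.2 ∘ Prod.map f f) ∈ hasCliqueEvent W m ℓ) :
    z ∈ hasCliqueEvent W n ℓ := by
  obtain ⟨S, hcard, hS⟩ := hz
  refine ⟨S.map ⟨f, hf.injective⟩, by simp [hcard], ?_⟩
  intro i hi j hj hij
  simp only [Finset.mem_map, Function.Embedding.coeFn_mk] at hi hj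
  obtain ⟨a, ha, rfl⟩ := hi
  obtain ⟨b, hb, rfl⟩ := hj
  exact hS a ha b hb (hf.lt_iff_lt.mp hij)

lemma measurePreserving_restrictGnw {m n : ℕ} {f : Fin m → Fin n} (hf : Function.Injective f) :
    MeasurePreserving
      (fun z : (Fin n → Ω) × (Fin n × Fin n → ℝ) => (z.1 ∘ f, z.2 ∘ Prod.map f f))
      (gnwMeasure μ n) (gnwMeasure μ m) :=
  (measurePreserving_comp_injective μ hf).prod
    (measurePreserving_comp_injective _ (hf.prodMap hf))

lemma gnw_compl_mono (hW : Measurable (Function.uncurry W)) {m n ℓ : ℕ} (h : m ≤ n) :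
    gnwMeasure μ n (hasCliqueEvent W n ℓ)ᶜ ≤ gnwMeasure μ m (hasCliqueEvent W m ℓ)ᶜ := by
  have hMP := measurePreserving_restrictGnw (μ := μ) (Fin.strictMono_castLE h).injective
  have hsub : (hasCliqueEvent W n ℓ)ᶜ ⊆
      (fun z : (Fin n → Ω) × (Fin n × Fin n → ℝ) =>
        (z.1 ∘ Fin.castLE h, z.2 ∘ Prod.map (Fin.castLE h) (Fin.castLE h)))
        ⁻¹' (hasCliqueEvent W m ℓ)ᶜ := by
    intro z hz hmem
    exact hz (mem_hasClique_of_sub (Fin.strictMono_castLE h) hmem)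
  calc gnwMeasure μ n (hasCliqueEvent W n ℓ)ᶜ
      ≤ gnwMeasure μ n (_ ⁻¹' (hasCliqueEvent W m ℓ)ᶜ) := measure_mono hsub
    _ = gnwMeasure μ m (hasCliqueEvent W m ℓ)ᶜ :=
        hMP.measure_preimage (measurableSet_hasCliqueEvent hW m ℓ).compl.nullMeasurableSet

end Events

section Step

variable {Ω : Type*} [MeasurableSpace Ω] {μ : Measure Ω} [IsProbabilityMeasure μ]
  {W : Ω → Ω → ℝ}

lemma gnw_step (hW : Measurable (Function.uncurry W)) (m ℓ : ℕ) :
    gnwMeasure μ (m + ℓ) (hasCliqueEvent W (m + ℓ) ℓ)ᶜ ≤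
      gnwMeasure μ m (hasCliqueEvent W m ℓ)ᶜ *
        gnwMeasure μ ℓ (fullCliqueEvent W ℓ)ᶜ := by
  classical
  set f₁ : Fin m → Fin (m + ℓ) := Fin.castAdd ℓ with hf₁
  set f₂ : Fin ℓ → Fin (m + ℓ) := Fin.natAdd m with hf₂
  have hne : ∀ a b, f₁ a ≠ f₂ b := by
    intro a b hab
    have : (f₁ a : ℕ) = (f₂ b : ℕ) := congrArg Fin.val hab
    simp only [hf₁, hf₂, Fin.coe_castAdd, Fin.coe_natAdd] at this
    omega
  have hinj1 : Function.Injective (Sum.elim f₁ f₂) := by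
    rintro (a | a) (b | b) hab <;> simp only [Sum.elim_inl, Sum.elim_inr] at hab
    · exact congrArg Sum.inl ((Fin.strictMono_castAdd ℓ).injective hab)
    · exact absurd hab (hne a b)
    · exact absurd hab.symm (hne b a)
    · exact congrArg Sum.inr ((Fin.strictMono_natAdd m).injective hab)
  have hinj2 : Function.Injective
      (Sum.elim (Prod.map f₁ f₁) (Prod.map f₂ f₂)) := by
    rintro (⟨a, a'⟩ | ⟨a, a'⟩) (⟨b, b'⟩ | ⟨b, b'⟩) hab <;>
      simp only [Sum.elim_inl, Sum.elim_inr, Prod.map, Prod.mk.injEq] at hab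
    · have := hinj1 (a₁ := .inl a) (a₂ := .inl b) hab.1
      have := hinj1 (a₁ := .inl a') (a₂ := .inl b') hab.2
      simp_all
    · exact absurd hab.1 (hne a b)
    · exact absurd hab.1.symm (hne b a)
    · have := hinj1 (a₁ := .inr a) (a₂ := .inr b) hab.1
      have := hinj1 (a₁ := .inr a') (a₂ := .inr b') hab.2
      simp_all
  have hφ := measurePreserving_pair_comp (X := Ω) μ hinj1
  have hψ := measurePreserving_pair_comp
    (X := ℝ) ((volume : Measure ℝ).restrict (Set.Ioo 0 1)) hinj2
  have hΨ : MeasurePreserving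
      (fun z : (Fin (m + ℓ) → Ω) × (Fin (m + ℓ) × Fin (m + ℓ) → ℝ) =>
        ((z.1 ∘ f₁, z.2 ∘ Prod.map f₁ f₁), (z.1 ∘ f₂, z.2 ∘ Prod.map f₂ f₂)))
      (gnwMeasure μ (m + ℓ)) ((gnwMeasure μ m).prod (gnwMeasure μ ℓ)) := by
    have := (measurePreserving_pppc
        (Measure.pi fun _ : Fin m => μ) (Measure.pi fun _ : Fin ℓ => μ)
        (Measure.pi fun _ : Fin m × Fin m =>
          (volume : Measure ℝ).restrict (Set.Ioo 0 1))
        (Measure.pi fun _ : Fin ℓ × Fin ℓ =>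
          (volume : Measure ℝ).restrict (Set.Ioo 0 1))).comp (hφ.prod hψ)
    exact this
  have hsub : (hasCliqueEvent W (m + ℓ) ℓ)ᶜ ⊆
      (fun z : (Fin (m + ℓ) → Ω) × (Fin (m + ℓ) × Fin (m + ℓ) → ℝ) =>
        ((z.1 ∘ f₁, z.2 ∘ Prod.map f₁ f₁), (z.1 ∘ f₂, z.2 ∘ Prod.map f₂ f₂)))
      ⁻¹' ((hasCliqueEvent W m ℓ)ᶜ ×ˢ (fullCliqueEvent W ℓ)ᶜ) := by
    intro z hz
    refine ⟨fun hmem => hz ?_, fun hmem => hz ?_⟩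
    · exact mem_hasClique_of_sub (Fin.strictMono_castAdd ℓ) hmem
    · exact mem_hasClique_of_block (Fin.strictMono_natAdd m) hmem
  calc gnwMeasure μ (m + ℓ) (hasCliqueEvent W (m + ℓ) ℓ)ᶜ
      ≤ gnwMeasure μ (m + ℓ) (_ ⁻¹' ((hasCliqueEvent W m ℓ)ᶜ ×ˢ (fullCliqueEvent W ℓ)ᶜ)) :=
        measure_mono hsub
    _ = ((gnwMeasure μ m).prod (gnwMeasure μ ℓ))
          ((hasCliqueEvent W m ℓ)ᶜ ×ˢ (fullCliqueEvent W ℓ)ᶜ) :=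
        hΨ.measure_preimage
          (((measurableSet_hasCliqueEvent hW m ℓ).compl.prod
            (measurableSet_fullCliqueEvent hW ℓ).compl)).nullMeasurableSet
    _ = _ := Measure.prod_prod _ _

end Step

section Final

variable {Ω : Type*} [MeasurableSpace Ω] {μ : Measure Ω} [IsProbabilityMeasure μ]
  {W : Ω → Ω → ℝ}

lemma gnw_iter (hW : Measurable (Function.uncurry W)) (ℓ : ℕ) (k : ℕ) :
    gnwMeasure μ (k * ℓ) (hasCliqueEvent W (k * ℓ) ℓ)ᶜ ≤
      (gnwMeasure μ ℓ (fullCliqueEvent W ℓ)ᶜ) ^ k := by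
  induction k with
  | zero => simpa using prob_le_one
  | succ k ih =>
      rw [Nat.succ_mul]
      calc gnwMeasure μ (k * ℓ + ℓ) (hasCliqueEvent W (k * ℓ + ℓ) ℓ)ᶜ
          ≤ gnwMeasure μ (k * ℓ) (hasCliqueEvent W (k * ℓ) ℓ)ᶜ *
              gnwMeasure μ ℓ (fullCliqueEvent W ℓ)ᶜ := gnw_step hW _ ℓ
        _ ≤ (gnwMeasure μ ℓ (fullCliqueEvent W ℓ)ᶜ) ^ k *
              gnwMeasure μ ℓ (fullCliqueEvent W ℓ)ᶜ := by
            exact mul_le_mul_left ih _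
        _ = _ := (pow_succ _ _).symm

theorem clique_zero_one_law_aux (hW : Measurable (Function.uncurry W))
    (h0 : ∀ x y, 0 ≤ W x y) (h1 : ∀ x y, W x y ≤ 1)
    (ℓ : ℕ) (hℓ : 1 ≤ ℓ) (hpos : 0 < cliqueDensity μ W ℓ) :
    Tendsto (fun n => gnwMeasure μ n (hasCliqueEvent W n ℓ)) atTop (nhds 1) := by
  set c : ENNReal := gnwMeasure μ ℓ (fullCliqueEvent W ℓ)ᶜ with hc
  have hδ : gnwMeasure μ ℓ (fullCliqueEvent W ℓ) = cliqueDensity μ W ℓ :=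
    gnw_fullClique μ hW h0 h1 ℓ
  have hc1 : c < 1 := by
    rw [hc, prob_compl_eq_one_sub (measurableSet_fullCliqueEvent hW ℓ), hδ]
    exact ENNReal.sub_lt_self ENNReal.one_ne_top one_ne_zero (ne_of_gt hpos)
  set q : ℕ → ENNReal := fun n => gnwMeasure μ n (hasCliqueEvent W n ℓ)ᶜ with hq
  have hqle : ∀ n, q n ≤ c ^ (n / ℓ) := by
    intro n
    calc q n ≤ q (n / ℓ * ℓ) := gnw_compl_mono hW (Nat.div_mul_le_self n ℓ)
      _ ≤ c ^ (n / ℓ) := gnw_iter hW ℓ (n / ℓ)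
  have hdiv : Tendsto (fun n : ℕ => n / ℓ) atTop atTop := by
    refine Filter.tendsto_atTop_atTop.2 fun b => ⟨b * ℓ, fun n hn => ?_⟩
    exact (Nat.le_div_iff_mul_le hℓ).2 hn
  have hq0 : Tendsto q atTop (nhds 0) := by
    refine tendsto_of_tendsto_of_tendsto_of_le_of_le (g := fun _ : ℕ => (0 : ENNReal))
      (h := fun n => c ^ (n / ℓ)) tendsto_const_nhds
      ((ENNReal.tendsto_pow_atTop_nhds_zero_of_lt_one hc1).comp hdiv)
      (fun n => zero_le) hqle
  have hp : ∀ n, gnwMeasure μ n (hasCliqueEvent W n ℓ) = 1 - q n := by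
    intro n
    have h := prob_compl_eq_one_sub (μ := gnwMeasure μ n)
      (measurableSet_hasCliqueEvent hW n ℓ).compl
    rw [compl_compl] at h
    simpa [hq] using h
  simp only [hp]
  have := ENNReal.Tendsto.sub (tendsto_const_nhds (x := (1 : ENNReal))) hq0
    (Or.inl ENNReal.one_ne_top)
  simpa using this

end Final


/-- If `t(K_ℓ, W) > 0` for some `ℓ ≥ 1`, then `P[ω(G(n,W)) ≥ ℓ] → 1` as `n → ∞`. -/
theorem clique_zero_one_law {Ω : Type*} [MeasurableSpace Ω] (μ : Measure Ω)
    [IsProbabilityMeasure μ] (W : Ω → Ω → ℝ) (hW : Measurable (Function.uncurry W))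
    (hsymm : ∀ x y, W x y = W y x) (h0 : ∀ x y, 0 ≤ W x y) (h1 : ∀ x y, W x y ≤ 1)
    (ℓ : ℕ) (hℓ : 1 ≤ ℓ) (hpos : 0 < cliqueDensity μ W ℓ) :
    Tendsto (fun n => gnwMeasure μ n (hasCliqueEvent W n ℓ)) atTop (nhds 1) :=
  clique_zero_one_law_aux hW h0 h1 ℓ hℓ hpos
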